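/- Let A, B, C, D > 0, 0 < p < 2, 0 < q < 2, and let M, N > 0 satisfy A·M²·N > B·M^p and C·M·N² > D·N^q. Set c = min(A·M·N − B·M^{p−1}, C·M·N − D·N^{q−1}) > 0. If w, z : [0,T) → (0,∞) are differentiable with w'(t) = A·w²·z − B·w^p, z'(t) = C·w·z² − D·z^q on [0,T) and w(0) ≥ M, z(0) ≥ N, then w(t) ≥ M/(1 − c·t) and z(t) ≥ N/(1 − c·t) for all t ∈ [0,T); consequently T ≤ 1/c, i.e., the solution blows up in finite time. -/

import Mathlib

open Set MeasureTheory Filter Topology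

/-- If `f t₀ = 0` and `f` has positive derivative at `t₀`, then `f > 0` just to the right. -/
lemma aux_eventually_pos_right {f : ℝ → ℝ} {f' t₀ : ℝ}
    (hf : HasDerivAt f f' t₀) (h0 : f t₀ = 0) (h' : 0 < f') :
    ∀ᶠ s in 𝓝[>] t₀, 0 < f s := by
  have hslope : Tendsto (slope f t₀) (𝓝[>] t₀) (𝓝 f') :=
    (hasDerivAt_iff_tendsto_slope.mp hf).mono_left
      (nhdsWithin_mono _ (fun x hx => ne_of_gt hx))
  have h1 : ∀ᶠ s in 𝓝[>] t₀, 0 < slope f t₀ s :=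
    hslope.eventually (eventually_gt_nhds h')
  filter_upwards [h1, self_mem_nhdsWithin] with s hs hs'
  rw [slope_def_field, h0, sub_zero] at hs
  have hst : (0:ℝ) < s - t₀ := sub_pos.mpr hs'
  have := mul_pos hs hst
  rwa [div_mul_cancel₀ _ (ne_of_gt hst)] at this

/-- Coupled comparison lemma: if `(φ, ψ)` is a strict sub-solution (whenever one component
touches, its derivative is strictly smaller) then `(w, z)` stays above `(φ, ψ)` on `[0, tS]`. -/
lemma aux_comp_system (tS : ℝ)
    (w z φ ψ w' z' φ' ψ' : ℝ → ℝ)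
    (hw : ∀ t ∈ Icc (0:ℝ) tS, HasDerivAt w (w' t) t)
    (hz : ∀ t ∈ Icc (0:ℝ) tS, HasDerivAt z (z' t) t)
    (hφ : ∀ t ∈ Icc (0:ℝ) tS, HasDerivAt φ (φ' t) t)
    (hψ : ∀ t ∈ Icc (0:ℝ) tS, HasDerivAt ψ (ψ' t) t)
    (h0w : φ 0 ≤ w 0) (h0z : ψ 0 ≤ z 0)
    (keyw : ∀ t ∈ Icc (0:ℝ) tS, w t = φ t → ψ t ≤ z t → φ' t < w' t)
    (keyz : ∀ t ∈ Icc (0:ℝ) tS, z t = ψ t → φ t ≤ w t → ψ' t < z' t) :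
    ∀ t ∈ Icc (0:ℝ) tS, φ t ≤ w t ∧ ψ t ≤ z t := by
  rcases lt_or_ge tS 0 with htS | htS
  · intro t ht; exact absurd (ht.1.trans ht.2) (not_le.mpr htS)
  set S : Set ℝ := {t | t ∈ Icc (0:ℝ) tS ∧ ∀ s ∈ Icc (0:ℝ) t, φ s ≤ w s ∧ ψ s ≤ z s} with hS
  have hS0 : (0:ℝ) ∈ S := by
    refine ⟨⟨le_refl _, htS⟩, fun s hs => ?_⟩
    have : s = 0 := le_antisymm hs.2 hs.1
    rw [this]; exact ⟨h0w, h0z⟩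
  have hSne : S.Nonempty := ⟨0, hS0⟩
  have hbdd : BddAbove S := ⟨tS, fun x hx => hx.1.2⟩
  set t₀ := sSup S with ht₀
  have h0le : 0 ≤ t₀ := le_csSup hbdd hS0
  have ht₀tS : t₀ ≤ tS := csSup_le hSne (fun x hx => hx.1.2)
  have ht₀mem : t₀ ∈ Icc (0:ℝ) tS := ⟨h0le, ht₀tS⟩
  have good_lt : ∀ s, 0 ≤ s → s < t₀ → φ s ≤ w s ∧ ψ s ≤ z s := by
    intro s hs0 hst
    obtain ⟨u, huS, hsu⟩ := exists_lt_of_lt_csSup hSne hst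
    exact huS.2 s ⟨hs0, hsu.le⟩
  have good_t₀ : φ t₀ ≤ w t₀ ∧ ψ t₀ ≤ z t₀ := by
    rcases eq_or_lt_of_le h0le with h0 | h0
    · rw [← h0]; exact ⟨h0w, h0z⟩
    · have hev : ∀ᶠ s in 𝓝[<] t₀, 0 ≤ w s - φ s ∧ 0 ≤ z s - ψ s := by
        filter_upwards [Ioo_mem_nhdsLT_of_mem (⟨h0, le_refl t₀⟩ : t₀ ∈ Ioc 0 t₀)]
          with s hs
        obtain ⟨hw1, hz1⟩ := good_lt s hs.1.le hs.2
        exact ⟨sub_nonneg.mpr hw1, sub_nonneg.mpr hz1⟩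
      have hcw : Tendsto (fun s => w s - φ s) (𝓝[<] t₀) (𝓝 (w t₀ - φ t₀)) :=
        (((hw t₀ ht₀mem).continuousAt.sub (hφ t₀ ht₀mem).continuousAt).tendsto).mono_left
          nhdsWithin_le_nhds
      have hcz : Tendsto (fun s => z s - ψ s) (𝓝[<] t₀) (𝓝 (z t₀ - ψ t₀)) :=
        (((hz t₀ ht₀mem).continuousAt.sub (hψ t₀ ht₀mem).continuousAt).tendsto).mono_left
          nhdsWithin_le_nhds
      constructor
      · have h := ge_of_tendsto hcw (hev.mono (fun s hs => hs.1))
        linarith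
      · have h := ge_of_tendsto hcz (hev.mono (fun s hs => hs.2))
        linarith
  have ht₀S : t₀ ∈ S := by
    refine ⟨ht₀mem, fun s hs => ?_⟩
    rcases eq_or_lt_of_le hs.2 with h | h
    · rw [h]; exact good_t₀
    · exact good_lt s hs.1 h
  by_cases hlt : t₀ < tS
  · exfalso
    have hw_ev : ∀ᶠ s in 𝓝[>] t₀, φ s < w s := by
      rcases eq_or_lt_of_le good_t₀.1 with heq | hlt'
      · have hd : φ' t₀ < w' t₀ := keyw t₀ ht₀mem heq.symm good_t₀.2
        have hder : HasDerivAt (fun s => w s - φ s) (w' t₀ - φ' t₀) t₀ :=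
          (hw t₀ ht₀mem).sub (hφ t₀ ht₀mem)
        have := aux_eventually_pos_right hder (by simp [← heq]) (by linarith)
        filter_upwards [this] with s hs; linarith
      · have hc : Tendsto (fun s => w s - φ s) (𝓝 t₀) (𝓝 (w t₀ - φ t₀)) :=
          ((hw t₀ ht₀mem).continuousAt.sub (hφ t₀ ht₀mem).continuousAt).tendsto
        have := hc.eventually (eventually_gt_nhds (by linarith : (0:ℝ) < w t₀ - φ t₀))
        filter_upwards [this.filter_mono nhdsWithin_le_nhds] with s hs; linarith
    have hz_ev : ∀ᶠ s in 𝓝[>] t₀, ψ s < z s := by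
      rcases eq_or_lt_of_le good_t₀.2 with heq | hlt'
      · have hd : ψ' t₀ < z' t₀ := keyz t₀ ht₀mem heq.symm good_t₀.1
        have hder : HasDerivAt (fun s => z s - ψ s) (z' t₀ - ψ' t₀) t₀ :=
          (hz t₀ ht₀mem).sub (hψ t₀ ht₀mem)
        have := aux_eventually_pos_right hder (by simp [← heq]) (by linarith)
        filter_upwards [this] with s hs; linarith
      · have hc : Tendsto (fun s => z s - ψ s) (𝓝 t₀) (𝓝 (z t₀ - ψ t₀)) :=
          ((hz t₀ ht₀mem).continuousAt.sub (hψ t₀ ht₀mem).continuousAt).tendsto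
        have := hc.eventually (eventually_gt_nhds (by linarith : (0:ℝ) < z t₀ - ψ t₀))
        filter_upwards [this.filter_mono nhdsWithin_le_nhds] with s hs; linarith
    obtain ⟨u, hu, hIoo⟩ := mem_nhdsGT_iff_exists_Ioo_subset.mp (hw_ev.and hz_ev)
    set t₁ := min ((t₀ + u) / 2) tS with ht₁
    have ht₀t₁ : t₀ < t₁ := lt_min (by simp only [mem_Ioi] at hu; linarith) hlt
    have ht₁S : t₁ ∈ S := by
      refine ⟨⟨le_trans h0le ht₀t₁.le, min_le_right _ _⟩, fun s hs => ?_⟩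
      rcases le_or_gt s t₀ with h | h
      · exact ht₀S.2 s ⟨hs.1, h⟩
      · have hsu : s < u := by
          have h1 : s ≤ t₁ := hs.2
          have h2 : t₁ ≤ (t₀ + u) / 2 := min_le_left _ _
          simp only [mem_Ioi] at hu; linarith
        have := hIoo ⟨h, hsu⟩
        exact ⟨this.1.le, this.2.le⟩
    exact absurd (le_csSup hbdd ht₁S) (not_le.mpr ht₀t₁)
  · have : t₀ = tS := le_antisymm ht₀tS (not_lt.mp hlt)
    intro t ht
    exact ht₀S.2 t ⟨ht.1, this ▸ ht.2⟩

set_option maxHeartbeats 1600000 in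
theorem blowup_example31
    (A B C D p q M N c T : ℝ)
    (hA : 0 < A) (hB : 0 < B) (hC : 0 < C) (hD : 0 < D)
    (hp0 : 0 < p) (hp2 : p < 2) (hq0 : 0 < q) (hq2 : q < 2)
    (hM : 0 < M) (hN : 0 < N)
    (h1 : B * M ^ p < A * M ^ (2 : ℕ) * N) (h2 : D * N ^ q < C * M * N ^ (2 : ℕ))
    (hc : c = min (A * M * N - B * M ^ (p - 1)) (C * M * N - D * N ^ (q - 1)))
    (hT : 0 < T)
    (w z : ℝ → ℝ)
    (hw0 : M ≤ w 0) (hz0 : N ≤ z 0)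
    (hpos : ∀ t ∈ Ico (0 : ℝ) T, 0 < w t ∧ 0 < z t)
    (hw' : ∀ t ∈ Ico (0 : ℝ) T,
      HasDerivAt w (A * w t ^ (2 : ℕ) * z t - B * w t ^ p) t)
    (hz' : ∀ t ∈ Ico (0 : ℝ) T,
      HasDerivAt z (C * w t * z t ^ (2 : ℕ) - D * z t ^ q) t) :
    (∀ t ∈ Ico (0 : ℝ) T, M / (1 - c * t) ≤ w t ∧ N / (1 - c * t) ≤ z t) ∧
      T ≤ 1 / c := by
  have hMp : M ^ (p - 1) * M = M ^ p := by
    rw [show p = (p - 1) + 1 by ring, Real.rpow_add hM, Real.rpow_one]; ring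
  have hNq : N ^ (q - 1) * N = N ^ q := by
    rw [show q = (q - 1) + 1 by ring, Real.rpow_add hN, Real.rpow_one]; ring
  have hc1 : 0 < A * M * N - B * M ^ (p - 1) := by
    have h1' : B * M ^ (p - 1) * M < (A * M * N) * M := by
      rw [mul_assoc, hMp]; nlinarith [h1]
    have := lt_of_mul_lt_mul_right h1' hM.le
    linarith
  have hc2 : 0 < C * M * N - D * N ^ (q - 1) := by
    have h2' : D * N ^ (q - 1) * N < (C * M * N) * N := by
      rw [mul_assoc, hNq]; nlinarith [h2]
    have := lt_of_mul_lt_mul_right h2' hN.le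
    linarith
  have hc0 : 0 < c := by rw [hc]; exact lt_min hc1 hc2
  -- main pointwise bound for t < 1/c
  have main : ∀ t, 0 ≤ t → t < T → 0 < 1 - c * t →
      M / (1 - c * t) ≤ w t ∧ N / (1 - c * t) ≤ z t := by
    intro t ht0 htT hden
    -- for each c' ∈ (0, c) we use the strict sub-solution with rate c'
    have H : ∀ c' ∈ Ioo (0:ℝ) c, M / (1 - c' * t) ≤ w t ∧ N / (1 - c' * t) ≤ z t := by
      intro c' hc'
      obtain ⟨hc'0, hc'c⟩ := hc'
      have hsub : Icc (0:ℝ) t ⊆ Ico (0:ℝ) T := fun s hs => ⟨hs.1, lt_of_le_of_lt hs.2 htT⟩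
      have hdenom : ∀ s ∈ Icc (0:ℝ) t, 0 < 1 - c' * s := by
        intro s hs
        have : c' * s ≤ c' * t := mul_le_mul_of_nonneg_left hs.2 hc'0.le
        have : c' * t ≤ c * t := mul_le_mul_of_nonneg_right hc'c.le ht0
        nlinarith [mul_le_mul_of_nonneg_left hs.2 hc'0.le]
      have hdenom1 : ∀ s ∈ Icc (0:ℝ) t, 1 - c' * s ≤ 1 := by
        intro s hs; nlinarith [mul_nonneg hc'0.le hs.1]
      have hφd : ∀ s ∈ Icc (0:ℝ) t,
          HasDerivAt (fun u => M / (1 - c' * u)) (M * c' / (1 - c' * s) ^ 2) s := by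
        intro s hs
        have hden' : (1 - c' * s) ≠ 0 := ne_of_gt (hdenom s hs)
        have h1d : HasDerivAt (fun u : ℝ => 1 - c' * u) (-c') s := by
          simpa using ((hasDerivAt_id s).const_mul c').const_sub 1
        have := (hasDerivAt_const s M).div h1d hden'
        exact this.congr_deriv (by ring)
      have hψd : ∀ s ∈ Icc (0:ℝ) t,
          HasDerivAt (fun u => N / (1 - c' * u)) (N * c' / (1 - c' * s) ^ 2) s := by
        intro s hs
        have hden' : (1 - c' * s) ≠ 0 := ne_of_gt (hdenom s hs)
        have h1d : HasDerivAt (fun u : ℝ => 1 - c' * u) (-c') s := by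
          simpa using ((hasDerivAt_id s).const_mul c').const_sub 1
        have := (hasDerivAt_const s N).div h1d hden'
        exact this.congr_deriv (by ring)
      -- the key strict inequalities
      have keyw : ∀ s ∈ Icc (0:ℝ) t, w s = M / (1 - c' * s) →
          N / (1 - c' * s) ≤ z s →
          M * c' / (1 - c' * s) ^ 2 < A * w s ^ (2:ℕ) * z s - B * w s ^ p := by
        intro s hs hws hzs
        set σ := 1 - c' * s with hσ
        have hσ0 : 0 < σ := hdenom s hs
        have hσ1 : σ ≤ 1 := hdenom1 s hs
        have hwpos : 0 < w s := by rw [hws]; positivity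
        have hstep1 : A * (M/σ) ^ (2:ℕ) * (N/σ) - B * (M/σ) ^ p
            ≤ A * w s ^ (2:ℕ) * z s - B * w s ^ p := by
          rw [hws]
          have : A * (M/σ) ^ (2:ℕ) * (N/σ) ≤ A * (M/σ) ^ (2:ℕ) * z s := by
            apply mul_le_mul_of_nonneg_left hzs; positivity
          linarith
        refine lt_of_lt_of_le ?_ hstep1
        have hrw : (M/σ) ^ p = M ^ p / σ ^ p := Real.div_rpow hM.le hσ0.le p
        rw [hrw]
        have e1 : A * M ^ (2:ℕ) * N / σ ^ (2:ℕ) ≤ A * M ^ (2:ℕ) * N / σ ^ (3:ℕ) := by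
          apply div_le_div_of_nonneg_left (by positivity) (by positivity)
          calc σ ^ (3:ℕ) = σ ^ (2:ℕ) * σ := by ring
            _ ≤ σ ^ (2:ℕ) * 1 := by nlinarith [sq_nonneg σ]
            _ = σ ^ (2:ℕ) := by ring
        have e2 : B * M ^ p / σ ^ p ≤ B * M ^ p / σ ^ (2:ℕ) := by
          apply div_le_div_of_nonneg_left (by positivity) (by positivity)
          have : σ ^ (2:ℝ) ≤ σ ^ p := Real.rpow_le_rpow_of_exponent_ge hσ0 hσ1 hp2.le
          calc σ ^ (2:ℕ) = σ ^ (2:ℝ) := by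
                rw [← Real.rpow_natCast σ 2]; norm_num
            _ ≤ σ ^ p := this
        have e3 : c' * M < (A * M * N - B * M ^ (p-1)) * M := by
          have : c ≤ A * M * N - B * M ^ (p-1) := hc ▸ min_le_left _ _
          nlinarith
        have e4 : (A * M * N - B * M ^ (p-1)) * M = A * M ^ (2:ℕ) * N - B * M ^ p := by
          have : B * M ^ (p-1) * M = B * M ^ p := by rw [mul_assoc, hMp]
          nlinarith [this]
        have e5 : M * c' / σ ^ 2 < (A * M ^ (2:ℕ) * N - B * M ^ p) / σ ^ 2 := by
          rw [div_lt_div_iff₀ (by positivity) (by positivity)]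
          nlinarith [e3, e4, sq_nonneg σ, pow_pos hσ0 2]
        calc M * c' / σ ^ 2 < (A * M ^ (2:ℕ) * N - B * M ^ p) / σ ^ 2 := e5
          _ = A * M ^ (2:ℕ) * N / σ ^ (2:ℕ) - B * M ^ p / σ ^ (2:ℕ) := by ring
          _ ≤ A * M ^ (2:ℕ) * N / σ ^ (3:ℕ) - B * M ^ p / σ ^ p := by linarith
          _ = A * (M/σ) ^ (2:ℕ) * (N/σ) - B * (M ^ p / σ ^ p) := by
            field_simp
      have keyz : ∀ s ∈ Icc (0:ℝ) t, z s = N / (1 - c' * s) →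
          M / (1 - c' * s) ≤ w s →
          N * c' / (1 - c' * s) ^ 2 < C * w s * z s ^ (2:ℕ) - D * z s ^ q := by
        intro s hs hzs hws
        set σ := 1 - c' * s with hσ
        have hσ0 : 0 < σ := hdenom s hs
        have hσ1 : σ ≤ 1 := hdenom1 s hs
        have hzpos : 0 < z s := by rw [hzs]; positivity
        have hstep1 : C * (M/σ) * (N/σ) ^ (2:ℕ) - D * (N/σ) ^ q
            ≤ C * w s * z s ^ (2:ℕ) - D * z s ^ q := by
          rw [hzs]
          have : C * (M/σ) * (N/σ) ^ (2:ℕ) ≤ C * w s * (N/σ) ^ (2:ℕ) := by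
            apply mul_le_mul_of_nonneg_right (mul_le_mul_of_nonneg_left hws hC.le)
            positivity
          linarith
        refine lt_of_lt_of_le ?_ hstep1
        have hrw : (N/σ) ^ q = N ^ q / σ ^ q := Real.div_rpow hN.le hσ0.le q
        rw [hrw]
        have e1 : C * M * N ^ (2:ℕ) / σ ^ (2:ℕ) ≤ C * M * N ^ (2:ℕ) / σ ^ (3:ℕ) := by
          apply div_le_div_of_nonneg_left (by positivity) (by positivity)
          calc σ ^ (3:ℕ) = σ ^ (2:ℕ) * σ := by ring
            _ ≤ σ ^ (2:ℕ) * 1 := by nlinarith [sq_nonneg σ]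
            _ = σ ^ (2:ℕ) := by ring
        have e2 : D * N ^ q / σ ^ q ≤ D * N ^ q / σ ^ (2:ℕ) := by
          apply div_le_div_of_nonneg_left (by positivity) (by positivity)
          have : σ ^ (2:ℝ) ≤ σ ^ q := Real.rpow_le_rpow_of_exponent_ge hσ0 hσ1 hq2.le
          calc σ ^ (2:ℕ) = σ ^ (2:ℝ) := by
                rw [← Real.rpow_natCast σ 2]; norm_num
            _ ≤ σ ^ q := this
        have e3 : c' * N < (C * M * N - D * N ^ (q-1)) * N := by
          have : c ≤ C * M * N - D * N ^ (q-1) := hc ▸ min_le_right _ _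
          nlinarith
        have e4 : (C * M * N - D * N ^ (q-1)) * N = C * M * N ^ (2:ℕ) - D * N ^ q := by
          have : D * N ^ (q-1) * N = D * N ^ q := by rw [mul_assoc, hNq]
          nlinarith [this]
        have e5 : N * c' / σ ^ 2 < (C * M * N ^ (2:ℕ) - D * N ^ q) / σ ^ 2 := by
          rw [div_lt_div_iff₀ (by positivity) (by positivity)]
          nlinarith [e3, e4, sq_nonneg σ, pow_pos hσ0 2]
        calc N * c' / σ ^ 2 < (C * M * N ^ (2:ℕ) - D * N ^ q) / σ ^ 2 := e5
          _ = C * M * N ^ (2:ℕ) / σ ^ (2:ℕ) - D * N ^ q / σ ^ (2:ℕ) := by ring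
          _ ≤ C * M * N ^ (2:ℕ) / σ ^ (3:ℕ) - D * N ^ q / σ ^ q := by linarith
          _ = C * (M/σ) * (N/σ) ^ (2:ℕ) - D * (N ^ q / σ ^ q) := by
            field_simp
      have := aux_comp_system t w z
        (fun u => M / (1 - c' * u)) (fun u => N / (1 - c' * u))
        (fun s => A * w s ^ (2:ℕ) * z s - B * w s ^ p)
        (fun s => C * w s * z s ^ (2:ℕ) - D * z s ^ q)
        (fun s => M * c' / (1 - c' * s) ^ 2)
        (fun s => N * c' / (1 - c' * s) ^ 2)
        (fun s hs => hw' s (hsub hs)) (fun s hs => hz' s (hsub hs))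
        hφd hψd
        (by simpa using hw0) (by simpa using hz0)
        keyw keyz
      exact this t ⟨ht0, le_refl t⟩
    -- pass to the limit c' → c⁻
    constructor
    · have tend : Tendsto (fun c' => M / (1 - c' * t)) (𝓝[<] c) (𝓝 (M / (1 - c * t))) := by
        apply Tendsto.mono_left _ nhdsWithin_le_nhds
        exact (ContinuousAt.div continuousAt_const
          ((continuousAt_const.sub (continuousAt_id.mul continuousAt_const)))
          (ne_of_gt hden)).tendsto
      refine le_of_tendsto tend ?_
      filter_upwards [Ioo_mem_nhdsLT_of_mem (⟨hc0, le_refl c⟩ : c ∈ Ioc 0 c)] with c' hc'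
      exact (H c' hc').1
    · have tend : Tendsto (fun c' => N / (1 - c' * t)) (𝓝[<] c) (𝓝 (N / (1 - c * t))) := by
        apply Tendsto.mono_left _ nhdsWithin_le_nhds
        exact (ContinuousAt.div continuousAt_const
          ((continuousAt_const.sub (continuousAt_id.mul continuousAt_const)))
          (ne_of_gt hden)).tendsto
      refine le_of_tendsto tend ?_
      filter_upwards [Ioo_mem_nhdsLT_of_mem (⟨hc0, le_refl c⟩ : c ∈ Ioc 0 c)] with c' hc'
      exact (H c' hc').2
  -- blowup time bound
  have hT1c : T ≤ 1 / c := by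
    by_contra hcon
    push_neg at hcon
    set r := 1 / c with hr
    have hr0 : 0 < r := by positivity
    have hrT : r < T := hcon
    have hcr : c * r = 1 := by rw [hr, mul_one_div, div_self (ne_of_gt hc0)]
    have t1 : Tendsto w (𝓝[<] r) (𝓝 (w r)) :=
      ((hw' r ⟨hr0.le, hrT⟩).continuousAt.tendsto).mono_left nhdsWithin_le_nhds
    have t2 : Tendsto (fun t => M / (1 - c * t)) (𝓝[<] r) atTop := by
      have hden_t : Tendsto (fun t : ℝ => 1 - c * t) (𝓝[<] r) (𝓝[>] 0) := by
        apply tendsto_nhdsWithin_of_tendsto_nhds_of_eventually_within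
        · have : Tendsto (fun t : ℝ => 1 - c * t) (𝓝 r) (𝓝 (1 - c * r)) :=
            (continuous_const.sub (continuous_const.mul continuous_id)).tendsto r
          rw [hcr] at this; simpa using this.mono_left nhdsWithin_le_nhds
        · filter_upwards [self_mem_nhdsWithin] with t ht
          simp only [mem_Iio] at ht
          have : c * t < c * r := mul_lt_mul_of_pos_left ht hc0
          simp only [mem_Ioi]; linarith [hcr]
      have := (tendsto_inv_nhdsGT_zero.comp hden_t).const_mul_atTop hM
      simpa [div_eq_mul_inv] using this
    have ev : ∀ᶠ t in 𝓝[<] r, M / (1 - c * t) ≤ w t := by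
      filter_upwards [Ioo_mem_nhdsLT_of_mem (⟨hr0, le_refl r⟩ : r ∈ Ioc 0 r)] with t ht
      have ht0 : 0 ≤ t := ht.1.le
      have htT : t < T := lt_trans ht.2 hrT
      have hden : 0 < 1 - c * t := by
        have : c * t < c * r := mul_lt_mul_of_pos_left ht.2 hc0
        linarith [hcr]
      exact (main t ht0 htT hden).1
    exact not_tendsto_atTop_of_tendsto_nhds t1 (tendsto_atTop_mono' _ ev t2)
  refine ⟨fun t ht => ?_, hT1c⟩
  have hden : 0 < 1 - c * t := by
    have h1 : t < 1 / c := lt_of_lt_of_le ht.2 hT1c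
    have : c * t < c * (1 / c) := mul_lt_mul_of_pos_left h1 hc0
    have hcc : c * (1 / c) = 1 := by field_simp
    linarith
  exact main t ht.1 ht.2 hden
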